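/- arXiv:1607.07156 — 2 statements merged into one kernel-verified Lean document; each statement's English description precedes it below -/
import Mathlib

section
/- For any finite group G of exponent dividing d, a quasi-equation ρ := (⋀_{1≤i≤n} uᵢ ≈ vᵢ) → u₀ ≈ v₀ over the signature {·}, in which every variable of the conclusion appears in the premise, holds in G if and only if the equation ((∏_{1≤i≤n}(uᵢ ∧ vᵢ))^d) · (u₀ ∧ v₀)^d ≈ (∏_{1≤i≤n}(uᵢ ∧ vᵢ))^d holds in the flat extension ♭(G). -/
/-- Terms in the signature `{·}`. -/
inductive GTerm : Type
  | var : ℕ → GTerm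
  | mul : GTerm → GTerm → GTerm

/-- Evaluation of a `{·}`-term under an assignment of the variables. -/
def GTerm.eval {M : Type*} [Mul M] (θ : ℕ → M) : GTerm → M
  | .var n => θ n
  | .mul s t => s.eval θ * t.eval θ

/-- The variable `x` occurs in the given term. -/
def GTerm.occurs (x : ℕ) : GTerm → Prop
  | .var n => n = x
  | .mul s t => s.occurs x ∨ t.occurs x

open Classical in
/-- The flat meet: `x ∧ y = x` if `x = y` and `0` otherwise.  Applied to `WithZero G`
this gives the meet of the flat extension `♭(G)` of a group `G`. -/
noncomputable def fwedge {α : Type*} [Zero α] (x y : α) : α := if x = y then x else 0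

lemma eval_coe {G : Type*} [Group G] (θ : ℕ → G) (t : GTerm) :
    t.eval (fun x => (θ x : WithZero G)) = ↑(t.eval θ) := by
  induction t with
  | var n => rfl
  | mul s t ihs iht => simp [GTerm.eval, ihs, iht]

lemma eval_congr {M : Type*} [Mul M] {θ σ : ℕ → M} (t : GTerm)
    (h : ∀ x, t.occurs x → θ x = σ x) : t.eval θ = t.eval σ := by
  induction t with
  | var n => exact h n rfl
  | mul s t ihs iht =>
      simp only [GTerm.eval]
      rw [ihs (fun x hx => h x (Or.inl hx)), iht (fun x hx => h x (Or.inr hx))]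

lemma coe_list_prod {G : Type*} [Group G] (l : List G) :
    (l.map (fun g : G => (g : WithZero G))).prod = ↑l.prod := by
  induction l with
  | nil => simp
  | cons a l ih => simp [ih]

lemma eval_ne_zero {G : Type*} [Group G] {θ : ℕ → WithZero G} {t : GTerm}
    (h : t.eval θ ≠ 0) : ∀ x, t.occurs x → θ x ≠ 0 := by
  induction t with
  | var n => intro x hx; subst hx; exact h
  | mul s t ihs iht =>
      intro x hx
      rcases hx with hx | hx
      · exact ihs (fun h0 => h (by simp [GTerm.eval, h0])) x hx
      · exact iht (fun h0 => h (by simp [GTerm.eval, h0])) x hx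

/-- For a finite group `G` of exponent dividing `d`, the quasi-equation
`(⋀ᵢ uᵢ ≈ vᵢ) → u₀ ≈ v₀` (all conclusion variables occurring in the premise) holds in `G`
iff the equation `(∏ᵢ (uᵢ ∧ vᵢ))ᵈ · (u₀ ∧ v₀)ᵈ ≈ (∏ᵢ (uᵢ ∧ vᵢ))ᵈ` holds in `♭(G)`. -/
theorem stmt5 {G : Type*} [Group G] [Finite G] (d : ℕ) (hd : 0 < d)
    (hexp : ∀ g : G, g ^ d = 1)
    (ps : List (GTerm × GTerm)) (u₀ v₀ : GTerm)
    (hvars : ∀ x : ℕ, (u₀.occurs x ∨ v₀.occurs x) →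
      ∃ p ∈ ps, p.1.occurs x ∨ p.2.occurs x) :
    (∀ θ : ℕ → G, (∀ p ∈ ps, p.1.eval θ = p.2.eval θ) → u₀.eval θ = v₀.eval θ) ↔
    (∀ θ : ℕ → WithZero G,
      ((ps.map fun p => fwedge (p.1.eval θ) (p.2.eval θ)).prod) ^ d *
          (fwedge (u₀.eval θ) (v₀.eval θ)) ^ d =
        ((ps.map fun p => fwedge (p.1.eval θ) (p.2.eval θ)).prod) ^ d) := by
  constructor
  · intro hq θ
    set P := (ps.map fun p => fwedge (p.1.eval θ) (p.2.eval θ)).prod with hP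
    by_cases hP0 : P = 0
    · rw [hP0, zero_pow hd.ne', zero_mul]
    · -- every factor is nonzero
      have hfac : ∀ p ∈ ps, p.1.eval θ = p.2.eval θ ∧ p.1.eval θ ≠ 0 := by
        intro p hp
        have : fwedge (p.1.eval θ) (p.2.eval θ) ≠ 0 := by
          intro h0
          apply hP0
          rw [hP]
          exact List.prod_eq_zero (by
            rw [List.mem_map]; exact ⟨p, hp, h0⟩)
        unfold fwedge at this
        split at this
        · exact ⟨by assumption, this⟩
        · exact absurd rfl this
      -- nonzero variables of premises
      have hvar0 : ∀ p ∈ ps, ∀ x, (p.1.occurs x ∨ p.2.occurs x) → θ x ≠ 0 := by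
        intro p hp x hx
        rcases hx with hx | hx
        · exact eval_ne_zero (hfac p hp).2 x hx
        · exact eval_ne_zero (by rw [← (hfac p hp).1]; exact (hfac p hp).2) x hx
      classical
      set θ' : ℕ → G := fun x => if h : θ x = 0 then 1 else WithZero.unzero h with hθ'
      have hcoe : ∀ x, θ x ≠ 0 → (↑(θ' x) : WithZero G) = θ x := by
        intro x hx; simp [hθ', hx]
      have heval : ∀ t : GTerm, (∀ x, t.occurs x → θ x ≠ 0) →
          t.eval θ = ↑(t.eval θ') := by
        intro t ht
        rw [← eval_coe θ' t]
        exact eval_congr t (fun x hx => (hcoe x (ht x hx)).symm)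
      have hprem : ∀ p ∈ ps, p.1.eval θ' = p.2.eval θ' := by
        intro p hp
        have h1 := heval p.1 (fun x hx => hvar0 p hp x (Or.inl hx))
        have h2 := heval p.2 (fun x hx => hvar0 p hp x (Or.inr hx))
        have := (hfac p hp).1
        rw [h1, h2] at this
        exact_mod_cast this
      have hconc := hq θ' hprem
      have hcvar : ∀ x, (u₀.occurs x ∨ v₀.occurs x) → θ x ≠ 0 := by
        intro x hx
        obtain ⟨p, hp, h⟩ := hvars x hx
        exact hvar0 p hp x h
      have hu : u₀.eval θ = ↑(u₀.eval θ') := heval u₀ (fun x hx => hcvar x (Or.inl hx))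
      have hv : v₀.eval θ = ↑(v₀.eval θ') := heval v₀ (fun x hx => hcvar x (Or.inr hx))
      have huv : u₀.eval θ = v₀.eval θ := by rw [hu, hv, hconc]
      have : fwedge (u₀.eval θ) (v₀.eval θ) ^ d = 1 := by
        unfold fwedge
        rw [if_pos huv, hu, ← WithZero.coe_pow, hexp, WithZero.coe_one]
      rw [this, mul_one]
  · intro he θ hprem
    have key := he (fun x => (θ x : WithZero G))
    set Pg : G := (ps.map fun p => p.1.eval θ).prod with hPg
    have hmap : (ps.map fun p => fwedge (p.1.eval (fun x => (θ x : WithZero G)))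
        (p.2.eval (fun x => (θ x : WithZero G)))).prod
        = (Pg : WithZero G) := by
      have h1 : (ps.map fun p => fwedge (p.1.eval (fun x => (θ x : WithZero G)))
          (p.2.eval (fun x => (θ x : WithZero G))))
          = ps.map fun p => ((p.1.eval θ : G) : WithZero G) := by
        apply List.map_congr_left
        intro p hp
        rw [eval_coe, eval_coe]
        unfold fwedge
        rw [if_pos (by exact_mod_cast hprem p hp)]
      rw [h1, hPg, show (ps.map fun p => ((p.1.eval θ : G) : WithZero G))
          = (ps.map fun p => p.1.eval θ).map (fun g : G => (g : WithZero G)) by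
            rw [List.map_map]; rfl]
      exact coe_list_prod _
    rw [hmap] at key
    set w := fwedge (u₀.eval (fun x => (θ x : WithZero G)))
        (v₀.eval (fun x => (θ x : WithZero G))) with hw
    have hPne : (Pg : WithZero G) ^ d ≠ 0 := by
      rw [← WithZero.coe_pow]; exact WithZero.coe_ne_zero
    have hw1 : w ^ d = 1 := mul_left_cancel₀ hPne (by rw [key, mul_one])
    have hwne : w ≠ 0 := by
      intro h0
      rw [h0, zero_pow hd.ne'] at hw1
      exact zero_ne_one hw1
    rw [hw] at hwne
    unfold fwedge at hwne
    split at hwne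
    · rename_i h
      rw [eval_coe, eval_coe] at h
      exact_mod_cast h
    · exact absurd rfl hwne
end

section
/- Every finite simple group in the variety generated by a finite group G has order at most |G|. -/
private lemma normal_inf_aux {F : Type*} [Group F] {A B : Subgroup F}
    (hA : A.Normal) (hB : B.Normal) : (A ⊓ B).Normal :=
  ⟨fun x hx g => ⟨hA.conj_mem x hx.1 g, hB.conj_mem x hx.2 g⟩⟩

private lemma finsetInf_normal {F : Type*} [Group F] {ι : Type*} [DecidableEq ι]
    (N : ι → Subgroup F) (hN : ∀ i, (N i).Normal) (S : Finset ι) : (S.inf N).Normal := by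
  induction S using Finset.induction_on with
  | empty => rw [Finset.inf_empty]; infer_instance
  | insert _ _ ha ih =>
      rw [Finset.inf_insert]
      exact normal_inf_aux (hN _) ih

private lemma aux_step {F H : Type*} [Group F] [Group H] [IsSimpleGroup H]
    (hnc : ¬ ∀ a b : H, a * b = b * a)
    (Ψ : F →* H) (hΨ : Function.Surjective Ψ)
    {N B : Subgroup F} (hNn : N.Normal) (hBn : B.Normal)
    (h : N ⊓ B ≤ Ψ.ker) : N ≤ Ψ.ker ∨ B ≤ Ψ.ker := by
  by_cases hN : N ≤ Ψ.ker
  · exact Or.inl hN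
  right
  have hmapn : (N.map Ψ).Normal := hNn.map Ψ hΨ
  have hne : N.map Ψ ≠ ⊥ := by
    intro hbot
    apply hN
    intro n hn
    have hmem : Ψ n ∈ N.map Ψ := ⟨n, hn, rfl⟩
    rw [hbot, Subgroup.mem_bot] at hmem
    exact MonoidHom.mem_ker.mpr hmem
  have hmap : N.map Ψ = ⊤ :=
    (IsSimpleGroup.eq_bot_or_eq_top_of_normal _ hmapn).resolve_left hne
  have hcent : ∀ b ∈ B, Ψ b ∈ Subgroup.center H := by
    intro b hb
    rw [Subgroup.mem_center_iff]
    intro x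
    have hx : x ∈ N.map Ψ := by rw [hmap]; trivial
    obtain ⟨n, hn, rfl⟩ := hx
    have hcomm : n * b * n⁻¹ * b⁻¹ ∈ N ⊓ B := by
      constructor
      · have h1 : b * n⁻¹ * b⁻¹ ∈ N := hNn.conj_mem n⁻¹ (N.inv_mem hn) b
        have h2 : n * (b * n⁻¹ * b⁻¹) ∈ N := N.mul_mem hn h1
        simpa [mul_assoc] using h2
      · have h1 : n * b * n⁻¹ ∈ B := hBn.conj_mem b hb n
        exact B.mul_mem h1 (B.inv_mem hb)
    have hk := h hcomm
    rw [MonoidHom.mem_ker] at hk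
    have hk' : Ψ n * Ψ b * (Ψ n)⁻¹ * (Ψ b)⁻¹ = 1 := by
      simpa [map_mul, map_inv] using hk
    rw [mul_inv_eq_one, mul_inv_eq_iff_eq_mul] at hk'
    exact hk'
  have hc : Subgroup.center H = ⊥ := by
    rcases IsSimpleGroup.eq_bot_or_eq_top_of_normal (Subgroup.center H)
        (inferInstance) with h' | h'
    · exact h'
    · exact absurd (fun a b => by
        have : b ∈ Subgroup.center H := by rw [h']; trivial
        exact (Subgroup.mem_center_iff.mp this a)) hnc
  intro b hb
  rw [MonoidHom.mem_ker]
  have hmem := hcent b hb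
  rwa [hc, Subgroup.mem_bot] at hmem

private lemma aux_finset {F H : Type*} [Group F] [Group H] [IsSimpleGroup H]
    (hnc : ¬ ∀ a b : H, a * b = b * a)
    (Ψ : F →* H) (hΨ : Function.Surjective Ψ)
    {ι : Type*} [DecidableEq ι] (N : ι → Subgroup F) (hN : ∀ i, (N i).Normal)
    (S : Finset ι) (h : S.inf N ≤ Ψ.ker) : ∃ i ∈ S, N i ≤ Ψ.ker := by
  induction S using Finset.induction_on with
  | empty =>
      exfalso
      obtain ⟨x, hx⟩ := exists_ne (1 : H)
      obtain ⟨w, rfl⟩ := hΨ x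
      apply hx
      rw [← MonoidHom.mem_ker]
      exact h (by rw [Finset.inf_empty]; trivial)
  | insert _ _ ha ih =>
      rw [Finset.inf_insert] at h
      rcases aux_step hnc Ψ hΨ (hN _) (finsetInf_normal N hN _) h with h' | h'
      · exact ⟨_, Finset.mem_insert_self _ _, h'⟩
      · obtain ⟨i, hi, hii⟩ := ih h'
        exact ⟨i, Finset.mem_insert_of_mem hi, hii⟩

/-- Every finite simple group in the variety generated by a finite group `G`
(i.e. satisfying every group identity holding in `G`) has order at most `|G|`. -/
theorem stmt8 {G H : Type*} [Group G] [Finite G] [Group H] [Finite H] [IsSimpleGroup H]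
    (hid : ∀ w : FreeGroup ℕ, (∀ θ : ℕ → G, FreeGroup.lift θ w = 1) →
      ∀ θ : ℕ → H, FreeGroup.lift θ w = 1) :
    Nat.card H ≤ Nat.card G := by
  classical
  by_cases hnc : ∀ a b : H, a * b = b * a
  · -- abelian case: `H` has prime order `p`, and `p` divides the exponent of `G`.
    letI : CommGroup H := { (inferInstance : Group H) with mul_comm := hnc }
    have hp : (Nat.card H).Prime := IsSimpleGroup.prime_card
    obtain ⟨x, hx⟩ := exists_ne (1 : H)
    have hpow : ∀ h : H, h ^ Nat.card G = 1 := by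
      intro h0
      have := hid (FreeGroup.of 0 ^ Nat.card G)
        (fun θ => by simp [pow_card_eq_one']) (fun _ => h0)
      simpa using this
    have h1 : orderOf x ∣ Nat.card G := orderOf_dvd_of_pow_eq_one (hpow x)
    have h2 : orderOf x = Nat.card H := by
      rcases hp.eq_one_or_self_of_dvd _ (orderOf_dvd_natCard x) with h' | h'
      · exact absurd (orderOf_eq_one_iff.mp h') hx
      · exact h'
    rw [← h2]
    exact Nat.le_of_dvd Nat.card_pos h1
  · -- nonabelian case
    letI := Fintype.ofFinite (H → G)
    obtain ⟨ι, hι⟩ := Countable.exists_injective_nat H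
    have hr : ∀ a : H, Function.invFun ι (ι a) = a :=
      fun a => Function.leftInverse_invFun hι a
    set Φ : FreeGroup H →* ((H → G) → G) := FreeGroup.lift (fun h j => j h) with hΦdef
    set Ψ : FreeGroup H →* H := FreeGroup.lift id with hΨdef
    have hΨof : ∀ h : H, Ψ (FreeGroup.of h) = h := fun h => FreeGroup.lift_apply_of
    have hΨsurj : Function.Surjective Ψ := fun h => ⟨FreeGroup.of h, hΨof h⟩
    have hev : ∀ (j : H → G) (w : FreeGroup H), (Φ w) j = FreeGroup.lift j w := by
      intro j w
      have hc : (Pi.evalMonoidHom (fun _ : H → G => G) j).comp Φ = FreeGroup.lift j := by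
        ext a
        simp [hΦdef, Pi.evalMonoidHom]
      exact DFunLike.congr_fun hc w
    have hker : ∀ w : FreeGroup H, Φ w = 1 → Ψ w = 1 := by
      intro w hw
      have key : ∀ θ : ℕ → H, FreeGroup.lift θ (FreeGroup.map ι w) = 1 := by
        apply hid
        intro θ
        have hc : (FreeGroup.lift θ).comp (FreeGroup.map ι) = FreeGroup.lift (θ ∘ ι) := by
          ext a
          simp
        have h1 : FreeGroup.lift θ (FreeGroup.map ι w) = FreeGroup.lift (θ ∘ ι) w :=
          DFunLike.congr_fun hc w
        rw [h1, ← hev (θ ∘ ι) w, hw]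
        rfl
      have hc : (FreeGroup.lift (Function.invFun ι)).comp (FreeGroup.map ι)
          = FreeGroup.lift id := by
        ext a
        simp [hr a]
      have h2 := key (Function.invFun ι)
      exact (DFunLike.congr_fun hc w).symm.trans h2
    set f : (H → G) → (FreeGroup H →* G) :=
      fun j => (Pi.evalMonoidHom (fun _ : H → G => G) j).comp Φ with hfdef
    have hfeval : ∀ (j : H → G) (w : FreeGroup H), f j w = (Φ w) j := fun _ _ => rfl
    have hinf : (Finset.univ : Finset (H → G)).inf (fun j => (f j).ker) ≤ Ψ.ker := by
      intro w hw
      have hΦw : Φ w = 1 := by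
        funext j
        have hle := Finset.inf_le (f := fun j => (f j).ker) (Finset.mem_univ j)
        have hmem := hle hw
        rw [MonoidHom.mem_ker] at hmem
        rw [← hfeval j w, hmem]
        rfl
      exact MonoidHom.mem_ker.mpr (hker w hΦw)
    obtain ⟨j, -, hj⟩ := aux_finset hnc Ψ hΨsurj (fun j => (f j).ker)
      (fun j => MonoidHom.normal_ker (f j)) Finset.univ hinf
    -- build a surjection `G → H`
    have hχ : ∃ χ : G → H, Function.Surjective χ := by
      refine ⟨fun y => if hy : ∃ w, f j w = y then Ψ hy.choose else 1, ?_⟩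
      intro h0
      refine ⟨f j (FreeGroup.of h0), ?_⟩
      have hy : ∃ w, f j w = f j (FreeGroup.of h0) := ⟨_, rfl⟩
      simp only [dif_pos hy]
      have hch := hy.choose_spec
      have h1 : Ψ (hy.choose * (FreeGroup.of h0)⁻¹) = 1 := by
        apply hj
        rw [MonoidHom.mem_ker, map_mul, map_inv, hch, mul_inv_cancel]
      rw [map_mul, map_inv, mul_inv_eq_one] at h1
      rw [h1, hΨof]
    obtain ⟨χ, hχs⟩ := hχ
    exact Nat.card_le_card_of_surjective χ hχs
end
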